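/- Let K be a field in which 2 is invertible and let a₀,a₁,a₂,a₃,a₄,a₅ ∈ K. Define the polynomials f(X) = X⁶ + a₅X⁵ + a₄X⁴ + a₃X³ + a₂X² + a₁X + a₀, P₃(X) = X³ + (a₅/2)X² + ((4a₄ − a₅²)/8)X + (8a₃ − 4a₄a₅ + a₅³)/16, P₄(X) = X·P₃(X) + (64a₂ − 16a₄² − 32a₃a₅ + 24a₄a₅² − 5a₅⁴)/128, and P₅(X) = X·P₄(X) + (128a₁ − 64a₃a₄ − 64a₂a₅ + 48a₄²a₅ + 48a₃a₅² − 40a₄a₅³ + 7a₅⁵)/256. Then the polynomial f(X) − P₃(X)² has degree at most 2, the polynomial X²·f(X) − P₄(X)² has degree at most 3, and the polynomial X⁴·f(X) − P₅(X)² has degree at most 4. -/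
import Mathlib


open Polynomial

set_option maxHeartbeats 1000000

theorem stmt0 {K : Type*} [Field K] (h2 : (2 : K) ≠ 0)
    (a₀ a₁ a₂ a₃ a₄ a₅ : K)
    (f P₃ P₄ P₅ : Polynomial K)
    (hf : f = X ^ 6 + C a₅ * X ^ 5 + C a₄ * X ^ 4 + C a₃ * X ^ 3 + C a₂ * X ^ 2
      + C a₁ * X + C a₀)
    (hP₃ : P₃ = X ^ 3 + C (a₅ / 2) * X ^ 2 + C ((4 * a₄ - a₅ ^ 2) / 8) * X
      + C ((8 * a₃ - 4 * a₄ * a₅ + a₅ ^ 3) / 16))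
    (hP₄ : P₄ = X * P₃
      + C ((64 * a₂ - 16 * a₄ ^ 2 - 32 * a₃ * a₅ + 24 * a₄ * a₅ ^ 2 - 5 * a₅ ^ 4) / 128))
    (hP₅ : P₅ = X * P₄
      + C ((128 * a₁ - 64 * a₃ * a₄ - 64 * a₂ * a₅ + 48 * a₄ ^ 2 * a₅ + 48 * a₃ * a₅ ^ 2
        - 40 * a₄ * a₅ ^ 3 + 7 * a₅ ^ 5) / 256)) :
    (f - P₃ ^ 2).degree ≤ 2 ∧ (X ^ 2 * f - P₄ ^ 2).degree ≤ 3 ∧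
      (X ^ 4 * f - P₅ ^ 2).degree ≤ 4 := by
  have h4 : (4 : K) ≠ 0 := by
    have := mul_ne_zero h2 h2; norm_num at this; exact this
  have h8 : (8 : K) ≠ 0 := by
    have := mul_ne_zero h4 h2; norm_num at this; exact this
  have h16 : (16 : K) ≠ 0 := by
    have := mul_ne_zero h8 h2; norm_num at this; exact this
  have h128 : (128 : K) ≠ 0 := by
    have := mul_ne_zero (mul_ne_zero h16 h4) h2; norm_num at this; exact this
  have h256 : (256 : K) ≠ 0 := by
    have := mul_ne_zero h128 h2; norm_num at this; exact this
  generalize hb2 : a₅ / 2 = b2 at hP₃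
  generalize hb1 : (4 * a₄ - a₅ ^ 2) / 8 = b1 at hP₃
  generalize hb0 : (8 * a₃ - 4 * a₄ * a₅ + a₅ ^ 3) / 16 = b0 at hP₃
  generalize hk4 : (64 * a₂ - 16 * a₄ ^ 2 - 32 * a₃ * a₅ + 24 * a₄ * a₅ ^ 2 - 5 * a₅ ^ 4) / 128
    = k4 at hP₄
  generalize hk5 : (128 * a₁ - 64 * a₃ * a₄ - 64 * a₂ * a₅ + 48 * a₄ ^ 2 * a₅ + 48 * a₃ * a₅ ^ 2
        - 40 * a₄ * a₅ ^ 3 + 7 * a₅ ^ 5) / 256 = k5 at hP₅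
  have e5 : a₅ = 2 * b2 := by rw [← hb2]; field_simp
  have e4 : a₄ = b2 ^ 2 + 2 * b1 := by rw [← hb2, ← hb1]; field_simp; ring
  have e3 : a₃ = 2 * b0 + 2 * b1 * b2 := by rw [← hb2, ← hb1, ← hb0]; field_simp; ring
  have e2 : a₂ = 2 * b0 * b2 + b1 ^ 2 + 2 * k4 := by
    rw [← hb2, ← hb1, ← hb0, ← hk4]; field_simp; ring
  have e1 : a₁ = 2 * b0 * b1 + 2 * b2 * k4 + 2 * k5 := by
    rw [← hb2, ← hb1, ← hb0, ← hk4, ← hk5]; field_simp; ring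
  have hA : f - P₃ ^ 2 = C (2 * k4) * X ^ 2 + C (2 * b2 * k4 + 2 * k5) * X
      + C (a₀ - b0 ^ 2) := by
    rw [hf, hP₃, e5, e4, e3, e2, e1]
    simp only [map_mul, map_add, map_sub, map_neg, map_pow, map_ofNat]
    ring
  have hB : X ^ 2 * f - P₄ ^ 2 = C (2 * k5) * X ^ 3
      + C (a₀ - b0 ^ 2 - 2 * b1 * k4) * X ^ 2 + C (-(2 * b0 * k4)) * X
      + C (-(k4 ^ 2)) := by
    rw [hf, hP₄, hP₃, e5, e4, e3, e2, e1]
    simp only [map_mul, map_add, map_sub, map_neg, map_pow, map_ofNat]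
    ring
  have hC : X ^ 4 * f - P₅ ^ 2 = C (a₀ - 2 * b2 * k5 - 2 * b1 * k4 - b0 ^ 2) * X ^ 4
      + C (-(2 * b1 * k5 + 2 * b0 * k4)) * X ^ 3 + C (-(2 * b0 * k5 + k4 ^ 2)) * X ^ 2
      + C (-(2 * k4 * k5)) * X + C (-(k5 ^ 2)) := by
    rw [hf, hP₅, hP₄, hP₃, e5, e4, e3, e2, e1]
    simp only [map_mul, map_add, map_sub, map_neg, map_pow, map_ofNat]
    ring
  refine ⟨?_, ?_, ?_⟩
  · rw [hA]; compute_degree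
  · rw [hB]; compute_degree
  · rw [hC]; compute_degree
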